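/- Let V be a finite-dimensional real vector space with a nondegenerate symmetric bilinear form κ (an inner product), and let D, S̃, S ⊆ V be subspaces with S̃ ⊆ D, S ⊆ V, and S̃⊥ ∩ S = {0} (orthogonal complement with respect to κ). Set H̃ := D ∩ S̃⊥. Then D = S̃ ⊕ H̃; moreover, if additionally V = D + Vv for a subspace Vv with S = D ∩ Vv, then H̃ ∩ Vv = {0} and V = H̃ ⊕ Vv. -/

import Mathlib

/-- Lemma 5.3 (linear algebra): in an inner product space, if `S̃ ⊆ D`,
`S̃⊥ ∩ S = {0}` and `dim S̃ = dim S`, then with `H̃ := D ⊓ S̃⊥` we have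
`D = S̃ ⊕ H̃`; moreover if `V = D + Vv` with `S = D ∩ Vv`, then
`H̃ ∩ Vv = {0}` and `V = H̃ ⊕ Vv`. -/
theorem stmt_16 {V : Type*} [NormedAddCommGroup V] [InnerProductSpace ℝ V]
    [FiniteDimensional ℝ V]
    (D St S Vv : Submodule ℝ V)
    (hStD : St ≤ D)
    (hperp : Stᗮ ⊓ S = ⊥)
    (hdim : Module.finrank ℝ St = Module.finrank ℝ S) :
    (Disjoint St (D ⊓ Stᗮ) ∧ St ⊔ (D ⊓ Stᗮ) = D) ∧
    ((D ⊔ Vv = ⊤) → (S = D ⊓ Vv) →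
      ((D ⊓ Stᗮ) ⊓ Vv = ⊥ ∧ (D ⊓ Stᗮ) ⊔ Vv = ⊤)) := by
  have hdisj : Disjoint St (D ⊓ Stᗮ) := by
    have : Disjoint St Stᗮ := Submodule.orthogonal_disjoint St
    exact this.mono_right inf_le_right
  have hsup : St ⊔ (D ⊓ Stᗮ) = D := by
    have h1 : St ⊔ Stᗮ ⊓ D = (St ⊔ Stᗮ) ⊓ D := (sup_inf_assoc_of_le Stᗮ hStD).symm
    rw [inf_comm D Stᗮ, h1, Submodule.sup_orthogonal_of_hasOrthogonalProjection, top_inf_eq]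
  refine ⟨⟨hdisj, hsup⟩, fun htop hS => ?_⟩
  have hHV : (D ⊓ Stᗮ) ⊓ Vv = ⊥ := by
    have : (D ⊓ Stᗮ) ⊓ Vv = Stᗮ ⊓ (D ⊓ Vv) := by
      ac_rfl
    rw [this, ← hS, hperp]
  refine ⟨hHV, ?_⟩
  -- dimension count
  have e1 : Module.finrank ℝ St + Module.finrank ℝ (D ⊓ Stᗮ : Submodule ℝ V)
      = Module.finrank ℝ D := by
    have := Submodule.finrank_sup_add_finrank_inf_eq St (D ⊓ Stᗮ)
    rw [hsup, disjoint_iff.mp hdisj, finrank_bot] at this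
    omega
  have e2 : Module.finrank ℝ V + Module.finrank ℝ S
      = Module.finrank ℝ D + Module.finrank ℝ Vv := by
    have := Submodule.finrank_sup_add_finrank_inf_eq D Vv
    rw [htop, ← hS, finrank_top] at this
    exact this
  have e3 : Module.finrank ℝ ((D ⊓ Stᗮ) ⊔ Vv : Submodule ℝ V)
      = Module.finrank ℝ V := by
    have := Submodule.finrank_sup_add_finrank_inf_eq (D ⊓ Stᗮ) Vv
    rw [hHV, finrank_bot] at this
    omega
  exact Submodule.eq_top_of_finrank_eq e3
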